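/- In the setting of the weighted mass transplantation lemma, if h is strictly decreasing and equality holds, i.e. ∫_{Ω_L} h ω dx + ∫_{Ω_U} h ω dx = 2 ∫_B h ω dx, then Ω_L = B and Ω_U = B up to sets of Lebesgue measure zero. -/

import Mathlib

open MeasureTheory Metric
open scoped symmDiff

lemma wmt_key (n : ℕ) (hn : 1 ≤ n) (ω h : ℝ → ℝ) (hω_pos : ∀ r, 0 < ω r)
    (hh : StrictAntiOn h (Set.Ici 0))
    (Ω : Set (EuclideanSpace ℝ (Fin n))) (hΩ : MeasurableSet Ω)
    (hωΩ : IntegrableOn (fun x => ω ‖x‖) Ω)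
    (hωB : IntegrableOn (fun x => ω ‖x‖) (ball (0 : EuclideanSpace ℝ (Fin n)) 1))
    (hhωΩ : IntegrableOn (fun x => h ‖x‖ * ω ‖x‖) Ω)
    (hhωB : IntegrableOn (fun x => h ‖x‖ * ω ‖x‖) (ball (0 : EuclideanSpace ℝ (Fin n)) 1)) :
    (∫ x in Ω, h ‖x‖ * ω ‖x‖) - (∫ x in ball (0 : EuclideanSpace ℝ (Fin n)) 1, h ‖x‖ * ω ‖x‖)
      - h 1 * ((∫ x in Ω, ω ‖x‖) - ∫ x in ball (0 : EuclideanSpace ℝ (Fin n)) 1, ω ‖x‖) ≤ 0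
    ∧ ((∫ x in Ω, h ‖x‖ * ω ‖x‖) - (∫ x in ball (0 : EuclideanSpace ℝ (Fin n)) 1, h ‖x‖ * ω ‖x‖)
      - h 1 * ((∫ x in Ω, ω ‖x‖) - ∫ x in ball (0 : EuclideanSpace ℝ (Fin n)) 1, ω ‖x‖) = 0
      → volume (Ω ∆ ball (0 : EuclideanSpace ℝ (Fin n)) 1) = 0) := by
  set B : Set (EuclideanSpace ℝ (Fin n)) := ball 0 1 with hBdef
  set g : EuclideanSpace ℝ (Fin n) → ℝ := fun x => (h ‖x‖ - h 1) * ω ‖x‖ with hgdef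
  have hgeq : g = fun x => h ‖x‖ * ω ‖x‖ - h 1 * ω ‖x‖ := by
    funext x; simp [hgdef]; ring
  have hgΩ : IntegrableOn g Ω := by
    rw [hgeq]; exact hhωΩ.sub (hωΩ.const_mul _)
  have hgB : IntegrableOn g B := by
    rw [hgeq]; exact hhωB.sub (hωB.const_mul _)
  have hBm : MeasurableSet B := measurableSet_ball
  -- D = ∫_Ω g - ∫_B g
  have hint : ∀ (s : Set (EuclideanSpace ℝ (Fin n))), IntegrableOn (fun x => ω ‖x‖) s
      → IntegrableOn (fun x => h ‖x‖ * ω ‖x‖) s →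
      ∫ x in s, g x = (∫ x in s, h ‖x‖ * ω ‖x‖) - h 1 * ∫ x in s, ω ‖x‖ := by
    intro s hw hhw
    rw [hgeq, integral_sub hhw (hw.const_mul _), MeasureTheory.integral_const_mul]
  have hD : (∫ x in Ω, h ‖x‖ * ω ‖x‖) - (∫ x in B, h ‖x‖ * ω ‖x‖)
      - h 1 * ((∫ x in Ω, ω ‖x‖) - ∫ x in B, ω ‖x‖)
      = (∫ x in Ω, g x) - ∫ x in B, g x := by
    rw [hint Ω hωΩ hhωΩ, hint B hωB hhωB]; ring
  have hsplitΩ : (∫ x in Ω ∩ B, g x) + ∫ x in Ω \ B, g x = ∫ x in Ω, g x :=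
    integral_inter_add_diff hBm hgΩ
  have hsplitB : (∫ x in Ω ∩ B, g x) + ∫ x in B \ Ω, g x = ∫ x in B, g x := by
    rw [← integral_inter_add_diff hΩ hgB, Set.inter_comm]
  -- pointwise signs
  have hg_nonpos : ∀ x ∈ Ω \ B, g x ≤ 0 := by
    intro x hx
    have hx1 : (1 : ℝ) ≤ ‖x‖ := by
      have := hx.2
      simpa [hBdef, mem_ball, dist_zero_right] using this
    have hle : h ‖x‖ ≤ h 1 :=
      hh.antitoneOn (by norm_num) (Set.mem_Ici.2 (norm_nonneg x)) hx1
    exact mul_nonpos_of_nonpos_of_nonneg (by linarith) (hω_pos _).le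
  have hg_pos : ∀ x ∈ B \ Ω, 0 < g x := by
    intro x hx
    have hx1 : ‖x‖ < 1 := by
      have := hx.1
      simpa [hBdef, mem_ball, dist_zero_right] using this
    have hlt : h 1 < h ‖x‖ := hh (Set.mem_Ici.2 (norm_nonneg x)) (by norm_num) hx1
    exact mul_pos (by linarith) (hω_pos _)
  have hA : ∫ x in Ω \ B, g x ≤ 0 :=
    setIntegral_nonpos (hΩ.diff hBm) hg_nonpos
  have hBB : 0 ≤ ∫ x in B \ Ω, g x :=
    setIntegral_nonneg (hBm.diff hΩ) (fun x hx => (hg_pos x hx).le)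
  constructor
  · rw [hD]; linarith
  · intro hzero
    rw [hD] at hzero
    have hA0 : ∫ x in Ω \ B, g x = 0 := by linarith
    have hB0 : ∫ x in B \ Ω, g x = 0 := by linarith
    -- B \ Ω is null
    have hnullBΩ : volume (B \ Ω) = 0 := by
      by_contra hne
      have hpos : 0 < volume (B \ Ω) := pos_iff_ne_zero.mpr hne
      have hsub : B \ Ω ⊆ Function.support g ∩ (B \ Ω) := fun x hx =>
        ⟨fun hc => absurd hc (ne_of_gt (hg_pos x hx)), hx⟩
      have : 0 < ∫ x in B \ Ω, g x := by
        rw [setIntegral_pos_iff_support_of_nonneg_ae]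
        · exact lt_of_lt_of_le hpos (measure_mono hsub)
        · exact (ae_restrict_iff' (hBm.diff hΩ)).2
            (Filter.Eventually.of_forall fun x hx => (hg_pos x hx).le)
        · exact hgB.mono_set Set.diff_subset
      linarith
    -- Ω \ B is null
    have hsphere : volume (sphere (0 : EuclideanSpace ℝ (Fin n)) 1) = 0 :=
      Measure.addHaar_sphere_of_ne_zero volume 0 one_ne_zero
    have hnullΩB : volume (Ω \ B) = 0 := by
      by_contra hne
      have hpos : 0 < volume (Ω \ B) := pos_iff_ne_zero.mpr hne
      have hsub : Ω \ B ⊆ (Function.support (fun x => -g x) ∩ (Ω \ B)) ∪ sphere (0 : EuclideanSpace ℝ (Fin n)) 1 := by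
        intro x hx
        rcases eq_or_lt_of_le (by
          have := hx.2
          simpa [hBdef, mem_ball, dist_zero_right] using this : (1 : ℝ) ≤ ‖x‖) with heq1 | hlt1
        · right; simpa [mem_sphere, dist_zero_right] using heq1.symm
        · left
          refine ⟨?_, hx⟩
          have hlt : h ‖x‖ < h 1 := hh (by norm_num) (Set.mem_Ici.2 (norm_nonneg x)) hlt1
          have : g x < 0 := mul_neg_of_neg_of_pos (by linarith) (hω_pos _)
          simp only [Function.mem_support]
          intro hc
          rw [neg_eq_zero] at hc
          exact absurd hc (ne_of_lt this)
      have hsupp_pos : 0 < volume (Function.support (fun x => -g x) ∩ (Ω \ B)) := by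
        by_contra hc
        push_neg at hc
        have hc0 : volume (Function.support (fun x => -g x) ∩ (Ω \ B)) = 0 := le_antisymm hc zero_le
        have : volume (Ω \ B) = 0 := measure_mono_null hsub (by
          exact measure_union_null hc0 hsphere)
        exact hne this
      have : 0 < ∫ x in Ω \ B, -g x := by
        rw [setIntegral_pos_iff_support_of_nonneg_ae]
        · exact hsupp_pos
        · exact (ae_restrict_iff' (hΩ.diff hBm)).2
            (Filter.Eventually.of_forall fun x hx => neg_nonneg.2 (hg_nonpos x hx))
        · exact (hgΩ.mono_set Set.diff_subset).neg
      rw [integral_neg, hA0, neg_zero] at this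
      exact lt_irrefl 0 this
    rw [Set.symmDiff_def]
    exact measure_union_null hnullΩB hnullBΩ

/-- Equality case of weighted mass transplantation: if h is strictly decreasing and
equality holds, ∫_{Ω_L} hω + ∫_{Ω_U} hω = 2∫_B hω, then Ω_L = B and Ω_U = B up to
sets of Lebesgue measure zero. -/
theorem weighted_mass_transplantation_equality (n : ℕ) (hn : 1 ≤ n)
    (ω h : ℝ → ℝ) (hω_meas : Measurable ω) (hω_pos : ∀ r, 0 < ω r)
    (hh : StrictAntiOn h (Set.Ici 0))
    (ΩL ΩU : Set (EuclideanSpace ℝ (Fin n)))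
    (hL : MeasurableSet ΩL) (hU : MeasurableSet ΩU)
    (hωL : IntegrableOn (fun x => ω ‖x‖) ΩL)
    (hωU : IntegrableOn (fun x => ω ‖x‖) ΩU)
    (hωB : IntegrableOn (fun x => ω ‖x‖) (ball (0 : EuclideanSpace ℝ (Fin n)) 1))
    (hvol : (∫ x in ΩL, ω ‖x‖) + (∫ x in ΩU, ω ‖x‖)
      = 2 * ∫ x in ball (0 : EuclideanSpace ℝ (Fin n)) 1, ω ‖x‖)
    (hhωL : IntegrableOn (fun x => h ‖x‖ * ω ‖x‖) ΩL)
    (hhωU : IntegrableOn (fun x => h ‖x‖ * ω ‖x‖) ΩU)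
    (hhωB : IntegrableOn (fun x => h ‖x‖ * ω ‖x‖) (ball (0 : EuclideanSpace ℝ (Fin n)) 1))
    (heq : (∫ x in ΩL, h ‖x‖ * ω ‖x‖) + (∫ x in ΩU, h ‖x‖ * ω ‖x‖)
      = 2 * ∫ x in ball (0 : EuclideanSpace ℝ (Fin n)) 1, h ‖x‖ * ω ‖x‖) :
    volume (ΩL ∆ ball (0 : EuclideanSpace ℝ (Fin n)) 1) = 0 ∧
      volume (ΩU ∆ ball (0 : EuclideanSpace ℝ (Fin n)) 1) = 0 := by
  obtain ⟨le1, eq1⟩ := wmt_key n hn ω h hω_pos hh ΩL hL hωL hωB hhωL hhωB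
  obtain ⟨le2, eq2⟩ := wmt_key n hn ω h hω_pos hh ΩU hU hωU hωB hhωU hhωB
  have hv : (((∫ x in ΩL, ω ‖x‖) - ∫ x in ball (0 : EuclideanSpace ℝ (Fin n)) 1, ω ‖x‖)
      + ((∫ x in ΩU, ω ‖x‖) - ∫ x in ball (0 : EuclideanSpace ℝ (Fin n)) 1, ω ‖x‖)) = 0 := by
    linarith
  have h10 : h 1 * (((∫ x in ΩL, ω ‖x‖) - ∫ x in ball (0 : EuclideanSpace ℝ (Fin n)) 1, ω ‖x‖))
      + h 1 * (((∫ x in ΩU, ω ‖x‖) - ∫ x in ball (0 : EuclideanSpace ℝ (Fin n)) 1, ω ‖x‖)) = 0 := by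
    rw [← mul_add, hv, mul_zero]
  exact ⟨eq1 (by linarith), eq2 (by linarith)⟩
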